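/- The internal hom Hom(Δ^n, Δ^q) has dimension exactly (n+1)·q: it contains a non-degenerate simplex of degree (n+1)·q, and every simplex of degree greater than (n+1)·q is degenerate. -/

import Mathlib

open CategoryTheory Simplicial MonoidalCategory SSet Limits

universe u v

/-- A simplex is degenerate if it is the image of a degeneracy map. -/
def SDeg (X : SSet.{u}) : ∀ {n : ℕ}, X _⦋n⦌ → Prop := fun {n} x =>
    match n, x with
  | 0, _ => False
  | n + 1, x => ∃ (i : Fin (n + 1)) (y : X _⦋n⦌), x = X.map (SimplexCategory.σ i).op y

/-- The `i`-th elementary edge `X(φ(i,i+1))(x)` of a `p`-simplex `x`. -/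
def elemEdge (X : SSet.{u}) {p : ℕ} (x : X _⦋p⦌) (i : Fin p) : X _⦋1⦌ :=
  X.map (SimplexCategory.mkOfLe i.castSucc i.succ (Fin.castSucc_lt_succ (i := i)).le).op x

/-- The internal hom of simplicial sets: its `p`-simplices are the
simplicial maps `Δ[p] ⊗ U ⟶ X`. -/
noncomputable def sHom (U X : SSet.{u}) : SSet.{u} where
  obj m := stdSimplex.obj m.unop ⊗ U ⟶ X
  map φ := TypeCat.ofHom fun f => (SSet.stdSimplex.map φ.unop ▷ U) ≫ f
  map_id m := by ext f : 3; simp; erw [CategoryTheory.Functor.map_id]; simp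
  map_comp φ ψ := by ext f : 3; simp; erw [CategoryTheory.Functor.map_comp]; simp [MonoidalCategory.comp_whiskerRight]

namespace Stmt16Aux

open SimplexCategory

abbrev Dl (k : ℕ) : SSet.{u} := stdSimplex.obj ⦋k⦌

/-- The value of a `p`-simplex of `sHom Δ⦋n⦌ Δ[q]` at the vertex `(k, j)` of `⦋p⦌ × ⦋n⦌`. -/
def vtx {n q p : ℕ} (f : (sHom (Dl.{u} n) (Dl.{u} q)) _⦋p⦌) (k : Fin (p + 1)) (j : Fin (n + 1)) :
    Fin (q + 1) :=
  (f.app (Opposite.op ⦋0⦌)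
    (⟨SimplexCategory.const ⦋0⦌ ⦋p⦌ k⟩, ⟨SimplexCategory.const ⦋0⦌ ⦋n⦌ j⟩)).down.toOrderHom 0

theorem evalVtx {n q p m : ℕ} (f : (sHom (Dl.{u} n) (Dl.{u} q)) _⦋p⦌)
    (a : (⦋m⦌ : SimplexCategory) ⟶ ⦋p⦌) (b : (⦋m⦌ : SimplexCategory) ⟶ ⦋n⦌) (i : Fin (m + 1)) :
    (f.app (Opposite.op ⦋m⦌) (⟨a⟩, ⟨b⟩)).down.toOrderHom i
      = vtx f (a.toOrderHom i) (b.toOrderHom i) := by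
  have h := (NatTrans.naturality_apply f (SimplexCategory.const ⦋0⦌ ⦋m⦌ i).op
    ((⟨a⟩, ⟨b⟩) : (stdSimplex.obj ⦋p⦌ ⊗ Dl.{u} n).obj (Opposite.op ⦋m⦌)))
  have h2 := congrArg (fun s => (s : (Dl.{u} q).obj (Opposite.op ⦋0⦌)).down.toOrderHom 0) h
  have h2' : (f.app (Opposite.op ⦋0⦌)
        (⟨SimplexCategory.const ⦋0⦌ ⦋m⦌ i ≫ a⟩, ⟨SimplexCategory.const ⦋0⦌ ⦋m⦌ i ≫ b⟩)).down.toOrderHom 0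
      = (f.app (Opposite.op ⦋m⦌) (⟨a⟩, ⟨b⟩)).down.toOrderHom i := h2
  rw [SimplexCategory.const_comp, SimplexCategory.const_comp] at h2'
  exact h2'.symm

def edge {m : ℕ} (i j : Fin (m + 1)) (h : i ≤ j) : (⦋1⦌ : SimplexCategory) ⟶ ⦋m⦌ :=
  SimplexCategory.Hom.mk ⟨fun t => if t = 0 then i else j, by
    intro a b hab
    fin_cases a <;> fin_cases b <;> simp_all⟩

theorem vtx_mono {n q p : ℕ} (f : (sHom (Dl.{u} n) (Dl.{u} q)) _⦋p⦌) {k k' : Fin (p + 1)}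
    {j j' : Fin (n + 1)} (hk : k ≤ k') (hj : j ≤ j') : vtx f k j ≤ vtx f k' j' := by
  have h := (f.app (Opposite.op ⦋1⦌) (⟨edge k k' hk⟩, ⟨edge j j' hj⟩)).down.toOrderHom.monotone
    (show (0 : Fin 2) ≤ 1 by decide)
  rw [evalVtx, evalVtx] at h
  exact h

theorem vtx_inj {n q p : ℕ} {f g : (sHom (Dl.{u} n) (Dl.{u} q)) _⦋p⦌}
    (h : ∀ k j, vtx f k j = vtx g k j) : f = g := by
  apply NatTrans.ext
  funext m
  obtain ⟨m⟩ := m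
  rw [← SimplexCategory.mk_len m]
  apply ConcreteCategory.hom_ext; intro x
  obtain ⟨⟨a⟩, ⟨b⟩⟩ := x
  apply ULift.ext
  apply SimplexCategory.Hom.ext
  apply OrderHom.ext
  funext i
  have e1 := evalVtx f (show (⦋m.len⦌ : SimplexCategory) ⟶ ⦋p⦌ from a)
    (show (⦋m.len⦌ : SimplexCategory) ⟶ ⦋n⦌ from b) i
  have e2 := evalVtx g (show (⦋m.len⦌ : SimplexCategory) ⟶ ⦋p⦌ from a)
    (show (⦋m.len⦌ : SimplexCategory) ⟶ ⦋n⦌ from b) i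
  exact e1.trans ((h _ _).trans e2.symm)

/-- Construct a simplex of the internal hom from a monotone map `⦋p⦌ × ⦋n⦌ → [q]`. -/
def ofFun {n q p : ℕ} (g : Fin (p + 1) → Fin (n + 1) → Fin (q + 1))
    (hg : ∀ {k k' j j'}, k ≤ k' → j ≤ j' → g k j ≤ g k' j') :
    (sHom (Dl.{u} n) (Dl.{u} q)) _⦋p⦌ where
  app m := TypeCat.ofHom fun x => ⟨SimplexCategory.Hom.mk ⟨fun i => g (x.1.down.toOrderHom i) (x.2.down.toOrderHom i),
    fun a b hab => hg (x.1.down.toOrderHom.monotone hab) (x.2.down.toOrderHom.monotone hab)⟩⟩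
  naturality _ _ _ := rfl

@[simp] theorem vtx_ofFun {n q p : ℕ} (g : Fin (p + 1) → Fin (n + 1) → Fin (q + 1)) (hg) (k j) :
    vtx (ofFun.{u} g hg) k j = g k j := rfl

theorem vtx_map {n q p p' : ℕ} (θ : (⦋p'⦌ : SimplexCategory) ⟶ ⦋p⦌)
    (f : (sHom (Dl.{u} n) (Dl.{u} q)) _⦋p⦌) (k : Fin (p' + 1)) (j : Fin (n + 1)) :
    vtx ((sHom (Dl.{u} n) (Dl.{u} q)).map θ.op f) k j = vtx f (θ.toOrderHom k) j :=
  evalVtx f (SimplexCategory.const ⦋0⦌ ⦋p'⦌ k ≫ θ) (SimplexCategory.const ⦋0⦌ ⦋n⦌ j) 0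

theorem sigma_val {p : ℕ} (i : Fin (p + 1)) (k : Fin (p + 2)) :
    (((SimplexCategory.σ i).toOrderHom k : Fin (p + 1)) : ℕ)
      = if (k : ℕ) ≤ (i : ℕ) then (k : ℕ) else (k : ℕ) - 1 := by
  show ((i.predAbove k : Fin (p + 1)) : ℕ) = _
  rcases le_or_gt (k : ℕ) (i : ℕ) with h | h
  · rw [if_pos h, Fin.predAbove_of_le_castSucc _ _ (by rw [Fin.le_def]; simpa using h)]
    simp [Fin.coe_castPred]
  · rw [if_neg (by omega), Fin.predAbove_of_castSucc_lt _ _ (by rw [Fin.lt_def]; simpa using h)]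
    simp [Fin.coe_pred]

/-- A monotone section used to split a degeneracy. -/
def L {p : ℕ} (i : Fin (p + 1)) (m : Fin (p + 1)) : Fin (p + 2) :=
  if (m : ℕ) ≤ (i : ℕ) then m.castSucc else m.succ

theorem L_val {p : ℕ} (i m : Fin (p + 1)) :
    ((L i m : Fin (p + 2)) : ℕ) = if (m : ℕ) ≤ (i : ℕ) then (m : ℕ) else (m : ℕ) + 1 := by
  unfold L; split_ifs <;> simp

theorem L_mono {p : ℕ} (i : Fin (p + 1)) {a b : Fin (p + 1)} (hab : a ≤ b) : L i a ≤ L i b := by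
  rw [Fin.le_def, L_val, L_val]
  rw [Fin.le_def] at hab
  split_ifs <;> omega

theorem deg_iff {n q p : ℕ} (f : (sHom (Dl.{u} n) (Dl.{u} q)) _⦋p + 1⦌) :
    SDeg (sHom (Dl.{u} n) (Dl.{u} q)) f
      ↔ ∃ i : Fin (p + 1), ∀ j, vtx f i.castSucc j = vtx f i.succ j := by
  show (∃ (i : Fin (p + 1)) (y : (sHom (Dl.{u} n) (Dl.{u} q)) _⦋p⦌),
      f = (sHom (Dl.{u} n) (Dl.{u} q)).map (SimplexCategory.σ i).op y) ↔ _
  constructor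
  · rintro ⟨i, y, rfl⟩
    refine ⟨i, fun j => ?_⟩
    rw [vtx_map, vtx_map]
    congr 1
    apply Fin.ext
    rw [sigma_val, sigma_val]
    simp only [Fin.coe_castSucc, Fin.val_succ]
    split_ifs <;> omega
  · rintro ⟨i, hcol⟩
    refine ⟨i, ofFun (fun k j => vtx f (L i k) j)
      (fun hk hj => vtx_mono f (L_mono i hk) hj), ?_⟩
    apply vtx_inj
    intro k j
    rw [vtx_map, vtx_ofFun]
    rcases lt_trichotomy (k : ℕ) ((i : ℕ) + 1) with hk | hk | hk
    · have hL : L i ((SimplexCategory.σ i).toOrderHom k) = k := by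
        apply Fin.ext; rw [L_val, sigma_val]; split_ifs <;> omega
      rw [hL]
    · have hks : k = i.succ := Fin.ext (by simpa using hk)
      have hL : L i ((SimplexCategory.σ i).toOrderHom k) = i.castSucc := by
        apply Fin.ext
        rw [L_val, sigma_val]
        simp only [Fin.coe_castSucc]
        split_ifs <;> omega
      rw [hL, hks]
      exact (hcol j).symm
    · have hL : L i ((SimplexCategory.σ i).toOrderHom k) = k := by
        apply Fin.ext; rw [L_val, sigma_val]; split_ifs <;> omega
      rw [hL]

theorem not_sdeg {n q p : ℕ} (f : (sHom (Dl.{u} n) (Dl.{u} q)) _⦋p⦌)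
    (h : ∀ i : Fin p, ∃ j, vtx f i.castSucc j ≠ vtx f i.succ j) :
    ¬ SDeg (sHom (Dl.{u} n) (Dl.{u} q)) f := by
  cases p with
  | zero => exact fun hd => hd
  | succ p =>
    rw [deg_iff]
    rintro ⟨i, hcol⟩
    obtain ⟨j, hj⟩ := h i
    exact hj (hcol j)

/-- The staircase simplex. -/
def G (n q : ℕ) (k : Fin ((n + 1) * q + 1)) (j : Fin (n + 1)) : Fin (q + 1) :=
  ⟨min q ((k : ℕ) - (n - (j : ℕ)) * q), Nat.lt_succ_of_le (min_le_left _ _)⟩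

theorem G_mono (n q : ℕ) {k k' : Fin ((n + 1) * q + 1)} {j j' : Fin (n + 1)}
    (hk : k ≤ k') (hj : j ≤ j') : G n q k j ≤ G n q k' j' := by
  have h1 : (n - (j' : ℕ)) * q ≤ (n - (j : ℕ)) * q :=
    Nat.mul_le_mul_right _ (by have := (Fin.le_def.mp hj); omega)
  exact Fin.mk_le_mk.mpr (min_le_min le_rfl (tsub_le_tsub (Fin.le_def.mp hk) h1))

end Stmt16Aux

open Stmt16Aux in
/-- `Hom(Δ[n], Δ[q])` has dimension exactly `(n+1)·q`. -/
theorem stmt_16 (n q : ℕ) :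
    (∃ f : (sHom (stdSimplex.{u}.obj ⦋n⦌) (stdSimplex.{u}.obj ⦋q⦌)) _⦋(n + 1) * q⦌,
      ¬ SDeg (sHom (stdSimplex.{u}.obj ⦋n⦌) (stdSimplex.{u}.obj ⦋q⦌)) f) ∧
    (∀ (p : ℕ)
      (f : (sHom (stdSimplex.{u}.obj ⦋n⦌) (stdSimplex.{u}.obj ⦋q⦌)) _⦋p + 1⦌),
      (n + 1) * q < p + 1 →
        SDeg (sHom (stdSimplex.{u}.obj ⦋n⦌) (stdSimplex.{u}.obj ⦋q⦌)) f) := by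
  constructor
  · refine ⟨ofFun (G n q) (fun hk hj => G_mono n q hk hj), ?_⟩
    apply not_sdeg
    intro i
    obtain ⟨k, hkN⟩ := i
    have hq : 0 < q := by
      rcases Nat.eq_zero_or_pos q with rfl | hq
      · simp at hkN
      · exact hq
    have hdiv : k / q ≤ n := by
      exact Nat.lt_succ_iff.mp ((Nat.div_lt_iff_lt_mul hq).mpr hkN)
    refine ⟨⟨n - k / q, Nat.lt_succ_of_le (Nat.sub_le n _)⟩, ?_⟩
    simp only [vtx_ofFun]
    intro heq
    have hv := congrArg Fin.val heq
    have hnj : n - (n - k / q) = k / q := Nat.sub_sub_self hdiv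
    have e1 : ((G n q (Fin.castSucc ⟨k, hkN⟩) ⟨n - k / q, Nat.lt_succ_of_le (Nat.sub_le n _)⟩ : Fin (q + 1)) : ℕ)
        = min q (k - q * (k / q)) := by
      show min q ((Fin.castSucc ⟨k, hkN⟩ : ℕ) - (n - (n - k / q)) * q) = _
      rw [show ((Fin.castSucc ⟨k, hkN⟩ : Fin ((n + 1) * q + 1)) : ℕ) = k from rfl, hnj, Nat.mul_comm]
    have e2 : ((G n q (Fin.succ ⟨k, hkN⟩) ⟨n - k / q, Nat.lt_succ_of_le (Nat.sub_le n _)⟩ : Fin (q + 1)) : ℕ)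
        = min q (k + 1 - q * (k / q)) := by
      show min q ((Fin.succ ⟨k, hkN⟩ : ℕ) - (n - (n - k / q)) * q) = _
      rw [show ((Fin.succ ⟨k, hkN⟩ : Fin ((n + 1) * q + 1)) : ℕ) = k + 1 from rfl, hnj, Nat.mul_comm]
    rw [e1, e2] at hv
    have hmod := Nat.mod_add_div k q
    have hmlt : k % q < q := Nat.mod_lt _ hq
    generalize hM : k % q = M at hv hmod hmlt
    generalize hD : q * (k / q) = D at hv hmod
    omega
  · intro p f hN
    rw [deg_iff]
    by_contra hno
    push_neg at hno
    set S : Fin (p + 2) → ℕ := fun k => ∑ j : Fin (n + 1), (vtx f k j : ℕ) with hS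
    have hSmono : StrictMono S := by
      rw [Fin.strictMono_iff_lt_succ]
      intro i
      obtain ⟨j, hj⟩ := hno i
      apply Finset.sum_lt_sum
      · intro j' _
        exact Fin.le_def.mp (vtx_mono f (Fin.castSucc_lt_succ (i := i)).le le_rfl)
      · exact ⟨j, Finset.mem_univ j,
          lt_of_le_of_ne (Fin.le_def.mp (vtx_mono f (Fin.castSucc_lt_succ (i := i)).le le_rfl))
            (fun hc => hj (Fin.ext hc))⟩
    have hSle : ∀ k, S k ≤ (n + 1) * q := by
      intro k
      calc S k ≤ ∑ _j : Fin (n + 1), q :=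
            Finset.sum_le_sum (fun j _ => Nat.lt_succ_iff.mp (vtx f k j).isLt)
        _ = (n + 1) * q := by simp [Finset.sum_const, mul_comm]
    have hinj : Function.Injective
        (fun k : Fin (p + 2) => (⟨S k, Nat.lt_succ_of_le (hSle k)⟩ : Fin ((n + 1) * q + 1))) := by
      intro a b h
      exact hSmono.injective (by simpa using congrArg Fin.val h)
    have hcard := Fintype.card_le_of_injective _ hinj
    simp only [Fintype.card_fin] at hcard
    omega
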